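/- Let f ∈ ℤ[x₁,...,x_n] with f(0)=0 be nondegenerate w.r.t. all faces of Δ₀(f), let σ = σ(f) and let κ = dim{k ∈ ℝ₊^n : ν(k) = σ N(k)} (equivalently, the codimension of the smallest face F₀(f) of Δ₀(f) meeting the diagonal). Then κ ≥ 1 and there exists c > 0 such that for all integers m > 0, all faces τ of Δ₀(f), and all sufficiently large primes p: A(p,m,τ) := Σ_{k ∈ ℕ^n, F(k)=τ, N(k) ≥ m} p^{−ν(k)} ≤ c p^{−mσ} m^{κ−1}. -/

import Mathlib

open MvPolynomial Real Complex Finset MeasureTheory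
open scoped Classical

noncomputable section

/-- `Δ = conv S + ℝ₊ⁿ`. -/
def NPoly {n : ℕ} (S : Set (Fin n → ℝ)) : Set (Fin n → ℝ) :=
  {x | ∃ a ∈ convexHull ℝ S, ∃ b : Fin n → ℝ, (∀ i, 0 ≤ b i) ∧ x = a + b}

/-- `τ` is a face of `Δ`: either `Δ` itself or a nonempty set
`{x ∈ Δ | L x = 0}` for an affine `L ≥ 0` on `Δ`. -/
def IsFaceOf {n : ℕ} (Δ τ : Set (Fin n → ℝ)) : Prop :=
  τ = Δ ∨ (τ.Nonempty ∧ ∃ (a₀ : ℝ) (a : Fin n → ℝ),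
    (∀ x ∈ Δ, 0 ≤ a₀ + ∑ i, a i * x i) ∧
    τ = {x | x ∈ Δ ∧ a₀ + ∑ i, a i * x i = 0})

/-- Support of `f` viewed inside `ℝⁿ`. -/
def suppSet {n : ℕ} (f : MvPolynomial (Fin n) ℤ) : Set (Fin n → ℝ) :=
  {x | ∃ d ∈ f.support, x = fun i => (d i : ℝ)}

/-- Newton polyhedron of `f` at the origin. -/
def NewtonΔ {n : ℕ} (f : MvPolynomial (Fin n) ℤ) : Set (Fin n → ℝ) :=
  NPoly (suppSet f)

/-- `N(k) = inf_{i ∈ Δ} k·i`. -/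
def Nfun {n : ℕ} (Δ : Set (Fin n → ℝ)) (k : Fin n → ℝ) : ℝ :=
  sInf {y | ∃ x ∈ Δ, y = ∑ i, k i * x i}

/-- `F(k) = {i ∈ Δ | k·i = N(k)}`. -/
def Ffun {n : ℕ} (Δ : Set (Fin n → ℝ)) (k : Fin n → ℝ) : Set (Fin n → ℝ) :=
  {x | x ∈ Δ ∧ ∑ i, k i * x i = Nfun Δ k}

/-- `f_τ`: the part of `f` supported on `τ`. -/
def faceRestrict {n : ℕ} (f : MvPolynomial (Fin n) ℤ) (τ : Set (Fin n → ℝ)) :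
    MvPolynomial (Fin n) ℤ :=
  ∑ d ∈ f.support, if (fun i => (d i : ℝ)) ∈ τ then monomial d (coeff d f) else 0

/-- `S_f(N) = N^{-n} ∑_{x ∈ {0,…,N-1}ⁿ} exp(2πi f(x)/N)`. -/
def Sexp {n : ℕ} (f : MvPolynomial (Fin n) ℤ) (N : ℕ) : ℂ :=
  (N : ℂ)⁻¹ ^ n * ∑ x : Fin n → Fin N,
    Complex.exp (2 * π * I * ((eval (fun i => ((x i : ℕ) : ℤ)) f : ℤ) : ℂ) / N)

/-- `f` is nondegenerate w.r.t. all faces of its Newton polyhedron: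
no `f_τ` has a critical point on the complex torus. -/
def Nondeg {n : ℕ} (f : MvPolynomial (Fin n) ℤ) : Prop :=
  ∀ τ : Set (Fin n → ℝ), IsFaceOf (NewtonΔ f) τ →
    ¬ ∃ x : Fin n → ℂ, (∀ i, x i ≠ 0) ∧
      ∀ i, eval x (pderiv i (MvPolynomial.map (Int.castRingHom ℂ) (faceRestrict f τ))) = 0

/-- `A(p,m,τ) = ∑_{k ∈ ℕⁿ, F(k)=τ, N(k) ≥ m} p^{-ν(k)}`. -/
def Afun {n : ℕ} (f : MvPolynomial (Fin n) ℤ) (p m : ℕ) (τ : Set (Fin n → ℝ)) : ℝ :=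
  ∑' k : Fin n → ℕ,
    if Ffun (NewtonΔ f) (fun i => (k i : ℝ)) = τ ∧
        (m : ℝ) ≤ Nfun (NewtonΔ f) (fun i => (k i : ℝ))
    then ((p : ℝ) ^ (∑ i, k i))⁻¹ else 0

/-- `B(p,m,τ) = ∑_{k ∈ ℕⁿ, F(k)=τ, N(k) = m-1} p^{-ν(k)}`. -/
def Bfun {n : ℕ} (f : MvPolynomial (Fin n) ℤ) (p m : ℕ) (τ : Set (Fin n → ℝ)) : ℝ :=
  ∑' k : Fin n → ℕ,
    if Ffun (NewtonΔ f) (fun i => (k i : ℝ)) = τ ∧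
        Nfun (NewtonΔ f) (fun i => (k i : ℝ)) = (m : ℝ) - 1
    then ((p : ℝ) ^ (∑ i, k i))⁻¹ else 0

/-- `E(p,f_τ) = (p-1)^{-n} ∑_{x ∈ {1,…,p-1}ⁿ} exp(2πi f_τ(x)/p)`. -/
def Efun {n : ℕ} (f : MvPolynomial (Fin n) ℤ) (p : ℕ) (τ : Set (Fin n → ℝ)) : ℂ :=
  ((p : ℂ) - 1)⁻¹ ^ n * ∑ x : Fin n → Fin (p - 1),
    Complex.exp (2 * π * I *
      ((eval (fun i => ((x i : ℕ) + 1 : ℤ)) (faceRestrict f τ) : ℤ) : ℂ) / p)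


section AuxConeForAbound

variable {q : ℕ}

def dotv (a x : Fin q → ℝ) : ℝ := ∑ i, a i * x i
lemma dotv_add (a x y : Fin q → ℝ) : dotv a (x + y) = dotv a x + dotv a y := by
  simp [dotv, mul_add, Finset.sum_add_distrib]
lemma dotv_smul (a : Fin q → ℝ) (c : ℝ) (x : Fin q → ℝ) :
    dotv a (c • x) = c * dotv a x := by
  simp only [dotv, Pi.smul_apply, smul_eq_mul, Finset.mul_sum]
  exact Finset.sum_congr rfl fun i _ => by ring
lemma dotv_sum (a : Fin q → ℝ) {ι : Type*} (s : Finset ι) (v : ι → Fin q → ℝ) :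
    dotv a (∑ i ∈ s, v i) = ∑ i ∈ s, dotv a (v i) := by
  classical
  induction s using Finset.induction_on with
  | empty => simp [dotv]
  | @insert i s' h ih => simp [Finset.sum_insert h, dotv_add, ih]
lemma dotv_zero (a : Fin q → ℝ) : dotv a 0 = 0 := by simp [dotv]
def coneSpan {ι : Type} [Fintype ι] (g : ι → Fin q → ℝ) : Set (Fin q → ℝ) :=
  {x | ∃ c : ι → ℝ, (∀ i, 0 ≤ c i) ∧ x = ∑ i, c i • g i}
def IsFGCone (C : Set (Fin q → ℝ)) : Prop :=
  ∃ (ι : Type) (_ : Fintype ι) (g : ι → Fin q → ℝ), C = coneSpan g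
lemma gen_mem_coneSpan {ι : Type} [Fintype ι] (g : ι → Fin q → ℝ) (i : ι) :
    g i ∈ coneSpan g := by
  refine ⟨fun j => if j = i then 1 else 0, fun j => by positivity, ?_⟩
  rw [Finset.sum_eq_single i]
  · simp
  · intro b _ hb; simp [hb]
  · simp
lemma zero_mem_coneSpan {ι : Type} [Fintype ι] (g : ι → Fin q → ℝ) :
    0 ∈ coneSpan g := ⟨0, by simp, by simp⟩
lemma add_mem_coneSpan {ι : Type} [Fintype ι] {g : ι → Fin q → ℝ} {x y : Fin q → ℝ}
    (hx : x ∈ coneSpan g) (hy : y ∈ coneSpan g) : x + y ∈ coneSpan g := by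
  obtain ⟨c, hc, rfl⟩ := hx
  obtain ⟨e, he, rfl⟩ := hy
  exact ⟨c + e, fun i => add_nonneg (hc i) (he i), by
    simp [add_smul, Finset.sum_add_distrib]⟩
lemma smul_mem_coneSpan {ι : Type} [Fintype ι] {g : ι → Fin q → ℝ} {x : Fin q → ℝ}
    {t : ℝ} (ht : 0 ≤ t) (hx : x ∈ coneSpan g) : t • x ∈ coneSpan g := by
  obtain ⟨c, hc, rfl⟩ := hx
  exact ⟨fun i => t * c i, fun i => mul_nonneg ht (hc i), by
    simp [Finset.smul_sum, smul_smul]⟩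
lemma sum_smul_mem_coneSpan {ι : Type} [Fintype ι] {g : ι → Fin q → ℝ}
    {κ : Type*} (s : Finset κ) (c : κ → ℝ) (v : κ → Fin q → ℝ)
    (hc : ∀ j ∈ s, 0 ≤ c j) (hv : ∀ j ∈ s, v j ∈ coneSpan g) :
    (∑ j ∈ s, c j • v j) ∈ coneSpan g := by
  classical
  induction s using Finset.induction_on with
  | empty => simpa using zero_mem_coneSpan g
  | @insert j s' h ih =>
    rw [Finset.sum_insert h]
    exact add_mem_coneSpan
      (smul_mem_coneSpan (hc j (Finset.mem_insert_self _ _)) (hv j (Finset.mem_insert_self _ _)))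
      (ih (fun a ha => hc a (Finset.mem_insert_of_mem ha))
          (fun a ha => hv a (Finset.mem_insert_of_mem ha)))

/-- double description generators -/
def ddGen {ι : Type} [Fintype ι] (g : ι → Fin q → ℝ) (a : Fin q → ℝ) :
    ι ⊕ ι × ι → Fin q → ℝ
  | Sum.inl i => if dotv a (g i) ≤ 0 then g i else 0
  | Sum.inr (i, j) =>
      if 0 < dotv a (g i) ∧ dotv a (g j) < 0 then
        dotv a (g i) • g j - dotv a (g j) • g i else 0

lemma dotv_combo (a : Fin q → ℝ) {ι : Type} [Fintype ι] (c : ι → ℝ) (g : ι → Fin q → ℝ) :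
    dotv a (∑ i, c i • g i) = ∑ i, c i * dotv a (g i) := by
  rw [dotv_sum]; exact Finset.sum_congr rfl fun i _ => dotv_smul _ _ _

lemma dd_key {ι : Type} [Fintype ι] (g : ι → Fin q → ℝ) (a : Fin q → ℝ) :
    ∀ (N : ℕ) (c : ι → ℝ), (Finset.univ.filter (fun i => c i ≠ 0)).card ≤ N →
      (∀ i, 0 ≤ c i) → dotv a (∑ i, c i • g i) ≤ 0 →
      (∑ i, c i • g i) ∈ coneSpan (ddGen g a) := by
  intro N
  induction N with
  | zero =>
    intro c hcard _ _
    have : ∀ i, c i = 0 := by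
      intro i
      by_contra hne
      have : i ∈ Finset.univ.filter (fun i => c i ≠ 0) := by simp [hne]
      have := Finset.card_pos.mpr ⟨i, this⟩
      omega
    have : (∑ i, c i • g i) = 0 := by
      rw [Finset.sum_eq_zero]; intro i _; rw [this i, zero_smul]
    rw [this]; exact zero_mem_coneSpan _
  | succ N ih =>
    intro c hcard hc hneg
    by_cases hA : ∀ i, c i ≠ 0 → dotv a (g i) ≤ 0
    · -- all active generators satisfy the inequality
      refine ⟨Sum.elim c 0, fun i => by cases i <;> simp [hc], ?_⟩
      rw [Fintype.sum_sum_type]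
      simp only [Sum.elim_inl, Sum.elim_inr, Pi.zero_apply, zero_smul,
        Finset.sum_const_zero, add_zero]
      refine Finset.sum_congr rfl fun i _ => ?_
      by_cases hci : c i = 0
      · simp [hci]
      · simp [ddGen, hA i hci]
    · push_neg at hA
      obtain ⟨i₁, hi₁ne, hi₁pos⟩ := hA
      have hx : dotv a (∑ i, c i • g i) = ∑ i, c i * dotv a (g i) := dotv_combo _ _ _
      have hex : ∃ j, c j ≠ 0 ∧ dotv a (g j) < 0 := by
        by_contra hno
        push_neg at hno
        have hterms : ∀ i ∈ Finset.univ, 0 ≤ c i * dotv a (g i) := by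
          intro i _
          by_cases hci : c i = 0
          · simp [hci]
          · exact mul_nonneg (hc i) (hno i hci)
        have : 0 < ∑ i, c i * dotv a (g i) := by
          refine Finset.sum_pos' hterms ⟨i₁, Finset.mem_univ _, ?_⟩
          exact mul_pos ((hc i₁).lt_of_ne (Ne.symm hi₁ne)) hi₁pos
        rw [hx] at hneg; linarith
      obtain ⟨j₁, hj₁ne, hj₁neg⟩ := hex
      have hij : i₁ ≠ j₁ := by intro h; rw [h] at hi₁pos; linarith
      set α := dotv a (g i₁) with hα
      set β := -dotv a (g j₁) with hβ
      have hαpos : 0 < α := hi₁pos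
      have hβpos : 0 < β := by simp [hβ]; linarith
      set μ := min (c i₁ / β) (c j₁ / α) with hμdef
      have hμpos : 0 < μ := lt_min (div_pos ((hc i₁).lt_of_ne (Ne.symm hi₁ne)) hβpos)
        (div_pos ((hc j₁).lt_of_ne (Ne.symm hj₁ne)) hαpos)
      set w := α • g j₁ + β • g i₁ with hwdef
      set c' := fun i => c i - (if i = i₁ then μ * β else 0) - (if i = j₁ then μ * α else 0)
        with hc'def
      have hc'i₁ : c' i₁ = c i₁ - μ * β := by simp [hc'def, hij]
      have hc'j₁ : c' j₁ = c j₁ - μ * α := by simp [hc'def, Ne.symm hij]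
      have hc'other : ∀ i, i ≠ i₁ → i ≠ j₁ → c' i = c i := by
        intro i h1 h2; simp [hc'def, h1, h2]
      have hc'nonneg : ∀ i, 0 ≤ c' i := by
        intro i
        by_cases h1 : i = i₁
        · subst h1; rw [hc'i₁]
          have : μ ≤ c i / β := min_le_left _ _
          have : μ * β ≤ c i := by
            calc μ * β ≤ (c i / β) * β := by nlinarith
            _ = c i := div_mul_cancel₀ _ (ne_of_gt hβpos)
          linarith
        · by_cases h2 : i = j₁
          · subst h2; rw [hc'j₁]
            have : μ ≤ c i / α := min_le_right _ _
            have : μ * α ≤ c i := by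
              calc μ * α ≤ (c i / α) * α := by nlinarith
              _ = c i := div_mul_cancel₀ _ (ne_of_gt hαpos)
            linarith
          · rw [hc'other i h1 h2]; exact hc i
      have hsum : (∑ i, c i • g i) = (∑ i, c' i • g i) + μ • w := by
        have : (∑ i, c' i • g i)
            = (∑ i, c i • g i) - (μ * β) • g i₁ - (μ * α) • g j₁ := by
          simp only [hc'def, sub_smul, ite_smul, zero_smul, Finset.sum_sub_distrib]
          rw [Finset.sum_ite_eq' Finset.univ i₁ (fun i => (μ * β) • g i),
              Finset.sum_ite_eq' Finset.univ j₁ (fun i => (μ * α) • g i)]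
          simp
        rw [this, hwdef]
        rw [smul_add, smul_smul, smul_smul]
        abel
      have hcond : 0 < dotv a (g i₁) ∧ dotv a (g j₁) < 0 := ⟨hi₁pos, hj₁neg⟩
      have hw_gen : w = ddGen g a (Sum.inr (i₁, j₁)) := by
        show w = if 0 < dotv a (g i₁) ∧ dotv a (g j₁) < 0 then
          dotv a (g i₁) • g j₁ - dotv a (g j₁) • g i₁ else 0
        rw [if_pos hcond]
        simp only [hwdef, hα, hβ, neg_smul, sub_eq_add_neg]
      have hdotw : dotv a w = 0 := by
        rw [hwdef, dotv_add, dotv_smul, dotv_smul, hα, hβ]; ring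
      have hneg' : dotv a (∑ i, c' i • g i) ≤ 0 := by
        have h1 : (∑ i, c' i • g i) = (∑ i, c i • g i) - μ • w := by
          rw [hsum]; abel
        rw [h1]
        have : dotv a ((∑ i, c i • g i) - μ • w)
            = dotv a (∑ i, c i • g i) - μ * dotv a w := by
          have := dotv_add a ((∑ i, c i • g i) - μ • w) (μ • w)
          simp only [sub_add_cancel] at this
          rw [this, dotv_smul]; ring
        rw [this, hdotw]; linarith
      have hcard' : (Finset.univ.filter (fun i => c' i ≠ 0)).card ≤ N := by
        have hsub : Finset.univ.filter (fun i => c' i ≠ 0)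
            ⊆ (Finset.univ.filter (fun i => c i ≠ 0)).erase
              (if c i₁ / β ≤ c j₁ / α then i₁ else j₁) := by
          intro i hi
          simp only [Finset.mem_filter, Finset.mem_univ, true_and] at hi
          by_cases hmin : c i₁ / β ≤ c j₁ / α
          · rw [if_pos hmin]
            have hzero : c' i₁ = 0 := by
              rw [hc'i₁]
              have : μ = c i₁ / β := by rw [hμdef, min_eq_left hmin]
              rw [this, div_mul_cancel₀ _ (ne_of_gt hβpos)]; ring
            have hii₁ : i ≠ i₁ := by intro h; subst h; exact hi hzero
            refine Finset.mem_erase.mpr ⟨hii₁, ?_⟩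
            simp only [Finset.mem_filter, Finset.mem_univ, true_and]
            intro hci
            by_cases h2 : i = j₁
            · subst h2
              exact hj₁ne hci
            · rw [hc'other i hii₁ h2] at hi; exact hi hci
          · rw [if_neg hmin]
            have hzero : c' j₁ = 0 := by
              rw [hc'j₁]
              have : μ = c j₁ / α := by
                rw [hμdef, min_eq_right (le_of_lt (lt_of_not_ge hmin))]
              rw [this, div_mul_cancel₀ _ (ne_of_gt hαpos)]; ring
            have hij₁ : i ≠ j₁ := by intro h; subst h; exact hi hzero
            refine Finset.mem_erase.mpr ⟨hij₁, ?_⟩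
            simp only [Finset.mem_filter, Finset.mem_univ, true_and]
            intro hci
            by_cases h2 : i = i₁
            · subst h2; exact hi₁ne hci
            · rw [hc'other i h2 hij₁] at hi; exact hi hci
        have hmem : (if c i₁ / β ≤ c j₁ / α then i₁ else j₁)
            ∈ Finset.univ.filter (fun i => c i ≠ 0) := by
          by_cases hmin : c i₁ / β ≤ c j₁ / α
          · rw [if_pos hmin]; simp [hi₁ne]
          · rw [if_neg hmin]; simp [hj₁ne]
        calc (Finset.univ.filter (fun i => c' i ≠ 0)).card
            ≤ ((Finset.univ.filter (fun i => c i ≠ 0)).erase _).card :=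
              Finset.card_le_card hsub
          _ = (Finset.univ.filter (fun i => c i ≠ 0)).card - 1 :=
              Finset.card_erase_of_mem hmem
          _ ≤ N := by omega
      have hx' := ih c' hcard' hc'nonneg hneg'
      rw [hsum]
      exact add_mem_coneSpan hx'
        (by rw [hw_gen]; exact smul_mem_coneSpan (le_of_lt hμpos) (gen_mem_coneSpan _ _))


lemma IsFGCone.inter_halfspace {C : Set (Fin q → ℝ)} (h : IsFGCone C) (a : Fin q → ℝ) :
    IsFGCone (C ∩ {x | dotv a x ≤ 0}) := by
  obtain ⟨ι, hι, g, rfl⟩ := h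
  refine ⟨ι ⊕ ι × ι, inferInstance, ddGen g a, ?_⟩
  apply Set.eq_of_subset_of_subset
  · rintro x ⟨hxC, hxa⟩
    obtain ⟨c, hc, rfl⟩ := hxC
    exact dd_key g a _ c le_rfl hc hxa
  · rintro x ⟨c, hc, rfl⟩
    constructor
    · refine sum_smul_mem_coneSpan Finset.univ c _ (fun j _ => hc j) (fun j _ => ?_)
      match j with
      | Sum.inl i =>
        show (if dotv a (g i) ≤ 0 then g i else 0) ∈ coneSpan g
        by_cases hcond : dotv a (g i) ≤ 0
        · rw [if_pos hcond]; exact gen_mem_coneSpan g i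
        · rw [if_neg hcond]; exact zero_mem_coneSpan g
      | Sum.inr (i, j') =>
        show (if 0 < dotv a (g i) ∧ dotv a (g j') < 0 then
          dotv a (g i) • g j' - dotv a (g j') • g i else 0) ∈ coneSpan g
        by_cases hcond : 0 < dotv a (g i) ∧ dotv a (g j') < 0
        · rw [if_pos hcond, sub_eq_add_neg, ← neg_smul]
          exact add_mem_coneSpan
            (smul_mem_coneSpan (le_of_lt hcond.1) (gen_mem_coneSpan g j'))
            (smul_mem_coneSpan (by linarith [hcond.2]) (gen_mem_coneSpan g i))
        · rw [if_neg hcond]; exact zero_mem_coneSpan g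
    · show dotv a _ ≤ 0
      rw [dotv_combo]
      apply Finset.sum_nonpos
      intro j _
      have hgle : dotv a (ddGen g a j) ≤ 0 := by
        match j with
        | Sum.inl i =>
          show dotv a (if dotv a (g i) ≤ 0 then g i else 0) ≤ 0
          by_cases hcond : dotv a (g i) ≤ 0
          · rwa [if_pos hcond]
          · rw [if_neg hcond, dotv_zero]
        | Sum.inr (i, j') =>
          show dotv a (if 0 < dotv a (g i) ∧ dotv a (g j') < 0 then
            dotv a (g i) • g j' - dotv a (g j') • g i else 0) ≤ 0
          by_cases hcond : 0 < dotv a (g i) ∧ dotv a (g j') < 0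
          · rw [if_pos hcond, sub_eq_add_neg, ← neg_smul, dotv_add, dotv_smul, dotv_smul]
            nlinarith [hcond.1, hcond.2]
          · rw [if_neg hcond, dotv_zero]
      exact mul_nonpos_of_nonneg_of_nonpos (hc j) hgle

lemma isFGCone_univ : IsFGCone (Set.univ : Set (Fin q → ℝ)) := by
  refine ⟨Fin q ⊕ Fin q, inferInstance,
    Sum.elim (fun i => Pi.single i 1) (fun i => -Pi.single i 1), ?_⟩
  apply Set.eq_of_subset_of_subset
  · intro x _
    refine ⟨Sum.elim (fun i => max (x i) 0) (fun i => max (-x i) 0),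
      fun i => by cases i <;> simp [le_max_right], ?_⟩
    rw [Fintype.sum_sum_type]
    simp only [Sum.elim_inl, Sum.elim_inr]
    funext j
    simp only [Finset.sum_apply, Pi.add_apply, Pi.smul_apply, Pi.neg_apply,
      Pi.single_apply, smul_eq_mul, mul_ite, mul_one, mul_zero, mul_neg]
    rw [Finset.sum_ite_eq, Finset.sum_neg_distrib, Finset.sum_ite_eq]
    simp only [Finset.mem_univ, if_true]
    rcases le_total 0 (x j) with h | h
    · rw [max_eq_left h, max_eq_right (by linarith : -x j ≤ 0)]; ring
    · rw [max_eq_right h, max_eq_left (by linarith : 0 ≤ -x j)]; ring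
  · intro x _; trivial

theorem weyl_cone {ι : Type*} (a : ι → Fin q → ℝ) (T : Finset ι) :
    IsFGCone {x : Fin q → ℝ | ∀ i ∈ T, dotv (a i) x ≤ 0} := by
  classical
  induction T using Finset.induction_on with
  | empty => simpa using isFGCone_univ
  | @insert i₀ T hi ih =>
    have hset : {x : Fin q → ℝ | ∀ i ∈ insert i₀ T, dotv (a i) x ≤ 0}
        = {x : Fin q → ℝ | ∀ i ∈ T, dotv (a i) x ≤ 0} ∩ {x | dotv (a i₀) x ≤ 0} := by
      ext x
      simp only [Set.mem_setOf_eq, Set.mem_inter_iff, Finset.mem_insert]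
      constructor
      · intro h; exact ⟨fun i hiT => h i (Or.inr hiT), h i₀ (Or.inl rfl)⟩
      · rintro ⟨h1, h2⟩ i (rfl | hiT)
        · exact h2
        · exact h1 i hiT
    rw [hset]
    exact ih.inter_halfspace _


end AuxConeForAbound

-- ============ Part II ============
section PartII

variable {n : ℕ}

/-- min over lattice support -/
def NminS (S : Finset (Fin n →₀ ℕ)) (hS : S.Nonempty) (k : Fin n → ℝ) : ℝ :=
  (S.image (fun d => ∑ i, k i * (d i : ℝ))).min' (hS.image _)

lemma NminS_le (S : Finset (Fin n →₀ ℕ)) (hS : S.Nonempty) (k : Fin n → ℝ)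
    {d : Fin n →₀ ℕ} (hd : d ∈ S) : NminS S hS k ≤ ∑ i, k i * (d i : ℝ) :=
  Finset.min'_le _ _ (Finset.mem_image_of_mem _ hd)

lemma exists_NminS (S : Finset (Fin n →₀ ℕ)) (hS : S.Nonempty) (k : Fin n → ℝ) :
    ∃ d ∈ S, NminS S hS k = ∑ i, k i * (d i : ℝ) := by
  have := Finset.min'_mem (S.image (fun d => ∑ i, k i * (d i : ℝ))) (hS.image _)
  rw [Finset.mem_image] at this
  obtain ⟨d, hd, hEq⟩ := this
  exact ⟨d, hd, hEq.symm⟩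

lemma isLinearMap_dotR (k : Fin n → ℝ) :
    IsLinearMap ℝ (fun x : Fin n → ℝ => ∑ i, k i * x i) := by
  constructor
  · intro x y; simp [mul_add, Finset.sum_add_distrib]
  · intro c x
    simp only [Pi.smul_apply, smul_eq_mul, Finset.mul_sum]
    exact Finset.sum_congr rfl fun i _ => by ring

lemma NminS_lb (f : MvPolynomial (Fin n) ℤ) (hf : f.support.Nonempty)
    (k : Fin n → ℝ) (hk : ∀ i, 0 ≤ k i) :
    ∀ x ∈ NewtonΔ f, NminS f.support hf k ≤ ∑ i, k i * x i := by
  rintro x ⟨a, ha, b, hb, rfl⟩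
  have hhull : convexHull ℝ (suppSet f) ⊆ {x | NminS f.support hf k ≤ ∑ i, k i * x i} := by
    apply convexHull_min
    · rintro v ⟨d, hd, rfl⟩
      exact NminS_le f.support hf k hd
    · exact convex_halfSpace_ge (isLinearMap_dotR k) _
  have h1 : NminS f.support hf k ≤ ∑ i, k i * a i := hhull ha
  have h2 : 0 ≤ ∑ i, k i * b i :=
    Finset.sum_nonneg fun i _ => mul_nonneg (hk i) (hb i)
  have : (∑ i, k i * (a + b) i) = (∑ i, k i * a i) + ∑ i, k i * b i := by
    simp [mul_add, Finset.sum_add_distrib]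
  rw [this]; linarith

lemma mem_NewtonΔ_of_mem_supp (f : MvPolynomial (Fin n) ℤ) {d : Fin n →₀ ℕ}
    (hd : d ∈ f.support) : (fun i => (d i : ℝ)) ∈ NewtonΔ f := by
  refine ⟨fun i => (d i : ℝ), subset_convexHull ℝ _ ⟨d, hd, rfl⟩, 0, fun i => le_refl 0, by simp⟩

lemma Nfun_eq_NminS (f : MvPolynomial (Fin n) ℤ) (hf : f.support.Nonempty)
    (k : Fin n → ℝ) (hk : ∀ i, 0 ≤ k i) :
    Nfun (NewtonΔ f) k = NminS f.support hf k := by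
  apply le_antisymm
  · apply csInf_le
    · exact ⟨NminS f.support hf k, fun y ⟨x, hx, hEq⟩ => hEq ▸ NminS_lb f hf k hk x hx⟩
    · obtain ⟨d, hd, hEq⟩ := exists_NminS f.support hf k
      exact ⟨fun i => (d i : ℝ), mem_NewtonΔ_of_mem_supp f hd, hEq⟩
  · apply le_csInf
    · obtain ⟨d, hd, hEq⟩ := exists_NminS f.support hf k
      exact ⟨_, fun i => (d i : ℝ), mem_NewtonΔ_of_mem_supp f hd, rfl⟩
    · rintro y ⟨x, hx, rfl⟩
      exact NminS_lb f hf k hk x hx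

lemma sigma_NminS_le (f : MvPolynomial (Fin n) ℤ) (hf : f.support.Nonempty)
    {σ : ℝ} (hσ : 0 < σ) (hdiag : (fun _ : Fin n => 1/σ) ∈ NewtonΔ f)
    (k : Fin n → ℝ) (hk : ∀ i, 0 ≤ k i) :
    σ * NminS f.support hf k ≤ ∑ i, k i := by
  have h := NminS_lb f hf k hk _ hdiag
  have h2 : (∑ i, k i * (1/σ)) = (∑ i, k i) / σ := by
    rw [Finset.sum_div]; exact Finset.sum_congr rfl fun i _ => by ring
  rw [h2] at h
  rw [mul_comm]
  exact (le_div_iff₀ hσ).mp h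

end PartII

-- ============ Part II-b : existence of nonzero k₀ with ν(k₀) = σ N(k₀) ============
section PartIIb

variable {n : ℕ}

lemma pi_single_sum (x : Fin n → ℝ) : x = ∑ i, x i • (Pi.single i (1:ℝ) : Fin n → ℝ) := by
  funext j
  simp only [Finset.sum_apply, Pi.smul_apply, Pi.single_apply, smul_eq_mul,
    mul_ite, mul_one, mul_zero]
  rw [Finset.sum_ite_eq Finset.univ j (fun i => x i)]
  simp

lemma exists_k0 (f : MvPolynomial (Fin n) ℤ) (hf : f.support.Nonempty)
    {σ : ℝ} (hσ : 0 < σ) (hn : 0 < n)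
    (hfirst : IsLeast {t : ℝ | 0 ≤ t ∧ (fun _ : Fin n => t) ∈ NewtonΔ f} (1 / σ)) :
    ∃ a : Fin n → ℝ, (∀ i, 0 ≤ a i) ∧ 0 < ∑ i, a i ∧
      (∀ d ∈ f.support, (∑ i, a i) ≤ σ * ∑ i, a i * (d i : ℝ)) := by
  have hσ' : 0 < 1/σ := by positivity
  set O : Set (Fin n → ℝ) := {x | ∀ i, x i < 1/σ} with hO
  have hOopen : IsOpen O := by
    have : O = Set.pi Set.univ (fun _ : Fin n => Set.Iio (1/σ)) := by
      ext x; simp [hO, Set.mem_pi]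
    rw [this]
    exact isOpen_set_pi Set.finite_univ (fun i _ => isOpen_Iio)
  have hOconv : Convex ℝ O := by
    have : O = Set.pi Set.univ (fun _ : Fin n => Set.Iio (1/σ)) := by
      ext x; simp [hO, Set.mem_pi]
    rw [this]
    exact convex_pi (fun i _ => convex_Iio _)
  set H := convexHull ℝ (suppSet f) with hH
  have hHconv : Convex ℝ H := convex_convexHull ℝ _
  have hHnonneg : ∀ x ∈ H, ∀ i, 0 ≤ x i := by
    intro x hx
    have : H ⊆ {x : Fin n → ℝ | ∀ i, 0 ≤ x i} := by
      apply convexHull_min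
      · rintro v ⟨d, _, rfl⟩ i; positivity
      · have : {x : Fin n → ℝ | ∀ i, 0 ≤ x i}
            = Set.pi Set.univ (fun _ : Fin n => Set.Ici (0:ℝ)) := by
          ext x; simp [Set.mem_pi, Set.mem_Ici, Pi.le_def]
        rw [this]
        exact convex_pi (fun i _ => convex_Ici _)
    exact this hx
  have hne : (Finset.univ : Finset (Fin n)).Nonempty := ⟨⟨0, hn⟩, Finset.mem_univ _⟩
  have hdisj : Disjoint O H := by
    rw [Set.disjoint_left]
    intro x hxO hxH
    set t := Finset.univ.sup' hne x with htdef
    have ht0 : 0 ≤ t := le_trans (hHnonneg x hxH ⟨0, hn⟩) (Finset.le_sup' x (Finset.mem_univ _))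
    have htlt : t < 1/σ := by
      rw [htdef, Finset.sup'_lt_iff]
      exact fun i _ => hxO i
    have hmem : (fun _ : Fin n => t) ∈ NewtonΔ f := by
      refine ⟨x, hxH, (fun _ => t) - x, fun i => ?_, by funext j; simp⟩
      simp only [Pi.sub_apply, sub_nonneg]
      exact Finset.le_sup' x (Finset.mem_univ i)
    have := hfirst.2 ⟨ht0, hmem⟩
    linarith
  obtain ⟨φ, u, h1, h2⟩ := geometric_hahn_banach_open hOconv hOopen hHconv hdisj
  set a : Fin n → ℝ := fun i => φ (Pi.single i 1) with hadef
  have hφ : ∀ x : Fin n → ℝ, φ x = ∑ i, x i * a i := by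
    intro x
    conv_lhs => rw [pi_single_sum x]
    rw [_root_.map_sum]
    exact Finset.sum_congr rfl fun i _ => by rw [_root_.map_smul, smul_eq_mul]
  have hanonneg : ∀ i, 0 ≤ a i := by
    intro i
    by_contra hai
    push_neg at hai
    set B := φ (fun _ : Fin n => (-1:ℝ)) with hB
    set M := max 0 ((u + 1 - B) / (-a i)) with hM
    have hM0 : 0 ≤ M := le_max_left _ _
    have hxM : ((fun _ : Fin n => (-1:ℝ)) - M • (Pi.single i (1:ℝ) : Fin n → ℝ)) ∈ O := by
      intro j
      simp only [Pi.sub_apply, Pi.smul_apply, Pi.single_apply, smul_eq_mul]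
      by_cases hji : j = i
      · rw [if_pos hji]; nlinarith
      · rw [if_neg hji, mul_zero, sub_zero]; linarith
    have hlt := h1 _ hxM
    rw [_root_.map_sub, _root_.map_smul, smul_eq_mul] at hlt
    have hMge : (u + 1 - B) / (-a i) ≤ M := le_max_right _ _
    have : u + 1 - B ≤ M * (-a i) := by
      rw [div_le_iff₀ (by linarith : 0 < -a i)] at hMge
      linarith
    have : φ (Pi.single i 1) = a i := rfl
    nlinarith [hlt]
  set A := ∑ i, a i with hAdef
  have hA0 : 0 ≤ A := Finset.sum_nonneg fun i _ => hanonneg i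
  have hu_diag : (1/σ) * A ≤ u := by
    by_contra hlt
    push_neg at hlt
    set ε := ((1/σ) * A - u) / (2 * (A + 1)) with hε
    have hεpos : 0 < ε := by
      apply div_pos (by linarith) (by linarith)
    have hxε : (fun _ : Fin n => 1/σ - ε) ∈ O := fun i => by simp; linarith
    have := h1 _ hxε
    rw [hφ] at this
    have hsum : (∑ i, (1/σ - ε) * a i) = (1/σ - ε) * A := by
      rw [hAdef, Finset.mul_sum]
    rw [hsum] at this
    have hεA : ε * (A + 1) = ((1/σ) * A - u) / 2 := by
      rw [hε]; field_simp
    nlinarith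
  have hAne : A ≠ 0 := by
    intro hA
    have hzero : ∀ i ∈ Finset.univ, a i = 0 :=
      (Finset.sum_eq_zero_iff_of_nonneg (fun i _ => hanonneg i)).mp hA
    obtain ⟨d, hd⟩ := hf
    have hdH : (fun i => (d i : ℝ)) ∈ H := subset_convexHull ℝ _ ⟨d, hd, rfl⟩
    have h2d := h2 _ hdH
    rw [hφ] at h2d
    have : (∑ i, (d i : ℝ) * a i) = 0 :=
      Finset.sum_eq_zero fun i _ => by rw [hzero i (Finset.mem_univ i), mul_zero]
    rw [this] at h2d
    have h0O : (0 : Fin n → ℝ) ∈ O := fun i => by simpa using hσ'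
    have := h1 _ h0O
    rw [_root_.map_zero] at this
    linarith
  refine ⟨a, hanonneg, lt_of_le_of_ne hA0 (Ne.symm hAne), ?_⟩
  intro d hd
  have hdH : (fun i => (d i : ℝ)) ∈ H := subset_convexHull ℝ _ ⟨d, hd, rfl⟩
  have h2d := h2 _ hdH
  rw [hφ] at h2d
  have hcomm : (∑ i, (d i : ℝ) * a i) = ∑ i, a i * (d i : ℝ) :=
    Finset.sum_congr rfl fun i _ => mul_comm _ _
  rw [hcomm] at h2d
  have : (1/σ) * A ≤ ∑ i, a i * (d i : ℝ) := le_trans hu_diag h2d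
  calc A = σ * ((1/σ) * A) := by field_simp
  _ ≤ σ * ∑ i, a i * (d i : ℝ) := by
      exact mul_le_mul_of_nonneg_left this (le_of_lt hσ)

end PartIIb

-- ============ Part III : decomposition lemma ============
section PartIII

variable {n : ℕ}

/-- the linear functional `ν - σ (·)·d`. -/
def Lfun (σ : ℝ) (d : Fin n →₀ ℕ) (v : Fin n → ℝ) : ℝ :=
  (∑ i, v i) - σ * ∑ i, v i * (d i : ℝ)

lemma Lfun_smul (σ : ℝ) (d : Fin n →₀ ℕ) (c : ℝ) (v : Fin n → ℝ) :
    Lfun σ d (c • v) = c * Lfun σ d v := by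
  have h1 : (∑ i, (c • v) i) = c * ∑ i, v i := by
    rw [Finset.mul_sum]; exact Finset.sum_congr rfl fun i _ => rfl
  have h2 : (∑ i, (c • v) i * (d i : ℝ)) = c * ∑ i, v i * (d i : ℝ) := by
    rw [Finset.mul_sum]
    exact Finset.sum_congr rfl fun i _ => by
      simp only [Pi.smul_apply, smul_eq_mul]; ring
  rw [Lfun, Lfun, h1, h2]; ring

lemma Lfun_add (σ : ℝ) (d : Fin n →₀ ℕ) (v w : Fin n → ℝ) :
    Lfun σ d (v + w) = Lfun σ d v + Lfun σ d w := by
  simp only [Lfun, Pi.add_apply, add_mul, Finset.sum_add_distrib, mul_add]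
  ring

lemma Lfun_sum (σ : ℝ) (d : Fin n →₀ ℕ) {ι : Type*} (s : Finset ι)
    (c : ι → ℝ) (v : ι → Fin n → ℝ) :
    Lfun σ d (∑ j ∈ s, c j • v j) = ∑ j ∈ s, c j * Lfun σ d (v j) := by
  classical
  induction s using Finset.induction_on with
  | empty => simp [Lfun]
  | @insert j s' h ih =>
    rw [Finset.sum_insert h, Finset.sum_insert h, Lfun_add, Lfun_smul, ih]

/-- decomposition: points with small `δ` are close to the cone `E` (per-d form). -/
lemma decomposition (S : Finset (Fin n →₀ ℕ)) (σ : ℝ) :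
    ∃ R : ℝ, 0 ≤ R ∧ ∀ (k : Fin n → ℝ) (δ : ℝ), (∀ i, 0 ≤ k i) → 0 ≤ δ →
      (∀ d ∈ S, Lfun σ d k ≤ δ) →
      ∃ y : Fin n → ℝ, ((∀ i, 0 ≤ y i) ∧ (∀ d ∈ S, Lfun σ d y ≤ 0))
        ∧ ∀ i, 0 ≤ k i - y i ∧ k i - y i ≤ R * δ := by
  classical
  -- constraint vectors in ℝ^{n+1}; coordinate 0 is the slack λ
  set a : (Fin n ⊕ (Unit ⊕ {d // d ∈ S})) → (Fin (n+1) → ℝ) :=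
    fun j => match j with
      | Sum.inl i => -(Pi.single i.succ 1)
      | Sum.inr (Sum.inl _) => -(Pi.single 0 1)
      | Sum.inr (Sum.inr d) => Fin.cons (-1) (fun i => 1 - σ * (d.1 i : ℝ))
    with ha
  have hdot_single : ∀ (j0 : Fin (n+1)) (z : Fin (n+1) → ℝ),
      dotv (-(Pi.single j0 1)) z = -z j0 := by
    intro j0 z
    simp only [dotv, Pi.neg_apply, Pi.single_apply, neg_mul, ite_mul, one_mul, zero_mul]
    rw [Finset.sum_neg_distrib, Finset.sum_ite_eq' Finset.univ j0 (fun j => z j)]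
    simp
  have hdot_cons : ∀ (w : Fin n → ℝ) (z : Fin (n+1) → ℝ),
      dotv (Fin.cons (-1) w) z = -z 0 + ∑ i, w i * z i.succ := by
    intro w z
    rw [dotv, Fin.sum_univ_succ]
    simp [Fin.cons_zero, Fin.cons_succ]
  obtain ⟨ι, hι, g, hg⟩ := weyl_cone a Finset.univ
  -- every generator satisfies the constraints
  have hgen : ∀ j : ι, (∀ i : Fin n, 0 ≤ g j i.succ) ∧ 0 ≤ g j 0 ∧
      ∀ d ∈ S, Lfun σ d (fun i => g j i.succ) ≤ g j 0 := by
    intro j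
    have hmem : g j ∈ {x : Fin (n+1) → ℝ | ∀ i ∈ (Finset.univ : Finset _), dotv (a i) x ≤ 0} := by
      rw [hg]; exact gen_mem_coneSpan g j
    refine ⟨fun i => ?_, ?_, fun d hd => ?_⟩
    · have := hmem (Sum.inl i) (Finset.mem_univ _)
      rw [show a (Sum.inl i) = -(Pi.single i.succ 1) from rfl, hdot_single] at this
      linarith
    · have := hmem (Sum.inr (Sum.inl ())) (Finset.mem_univ _)
      rw [show a (Sum.inr (Sum.inl ())) = -(Pi.single 0 1) from rfl, hdot_single] at this
      linarith
    · have := hmem (Sum.inr (Sum.inr ⟨d, hd⟩)) (Finset.mem_univ _)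
      rw [show a (Sum.inr (Sum.inr ⟨d, hd⟩))
        = Fin.cons (-1) (fun i => 1 - σ * (d i : ℝ)) from rfl, hdot_cons] at this
      have hexp : (∑ i, (1 - σ * (d i : ℝ)) * g j i.succ)
          = Lfun σ d (fun i => g j i.succ) := by
        simp only [Lfun, sub_mul, one_mul, Finset.sum_sub_distrib, Finset.mul_sum]
        congr 1
        exact Finset.sum_congr rfl fun i _ => by ring
      rw [hexp] at this
      linarith
  -- the ratio bound R
  set R : ℝ := ∑ j : ι, ∑ i : Fin n, (if g j 0 = 0 then 0 else g j i.succ / g j 0) with hR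
  have hRnonneg : 0 ≤ R := by
    apply Finset.sum_nonneg; intro j _
    apply Finset.sum_nonneg; intro i _
    by_cases h : g j 0 = 0
    · simp [h]
    · rw [if_neg h]
      exact div_nonneg ((hgen j).1 i) ((hgen j).2.1)
  have hratio : ∀ (j : ι) (i : Fin n), g j 0 ≠ 0 → g j i.succ ≤ R * g j 0 := by
    intro j i hj0
    have hpos : 0 < g j 0 := lt_of_le_of_ne (hgen j).2.1 (Ne.symm hj0)
    have hterm : g j i.succ / g j 0
        ≤ ∑ i' : Fin n, (if g j 0 = 0 then 0 else g j i'.succ / g j 0) := by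
      calc g j i.succ / g j 0
          = (if g j 0 = 0 then (0:ℝ) else g j i.succ / g j 0) := by rw [if_neg hj0]
        _ ≤ _ := Finset.single_le_sum
            (f := fun i' => if g j 0 = 0 then (0:ℝ) else g j i'.succ / g j 0)
            (fun i' _ => by
              by_cases h : g j 0 = 0
              · simp [h]
              · rw [if_neg h]; exact div_nonneg ((hgen j).1 i') (le_of_lt hpos))
            (Finset.mem_univ i)
    have hterm2 : (∑ i' : Fin n, (if g j 0 = 0 then 0 else g j i'.succ / g j 0)) ≤ R := by
      rw [hR]
      exact Finset.single_le_sum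
        (f := fun j' => ∑ i' : Fin n, (if g j' 0 = 0 then (0:ℝ) else g j' i'.succ / g j' 0))
        (fun j' _ => Finset.sum_nonneg fun i' _ => by
          by_cases h : g j' 0 = 0
          · simp [h]
          · rw [if_neg h]
            exact div_nonneg ((hgen j').1 i') ((hgen j').2.1))
        (Finset.mem_univ j)
    have : g j i.succ / g j 0 ≤ R := le_trans hterm hterm2
    calc g j i.succ = (g j i.succ / g j 0) * g j 0 := by field_simp
    _ ≤ R * g j 0 := mul_le_mul_of_nonneg_right this (le_of_lt hpos)
  refine ⟨R, hRnonneg, ?_⟩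
  intro k δ hk hδ hkd
  -- the lifted point is in the cone
  have hz : Fin.cons δ k ∈ {x : Fin (n+1) → ℝ | ∀ i ∈ (Finset.univ : Finset _), dotv (a i) x ≤ 0} := by
    intro j _
    match j with
    | Sum.inl i =>
      rw [show a (Sum.inl i) = -(Pi.single i.succ 1) from rfl, hdot_single]
      simp only [Fin.cons_succ]
      linarith [hk i]
    | Sum.inr (Sum.inl _) =>
      rw [show a (Sum.inr (Sum.inl ())) = -(Pi.single 0 1) from rfl, hdot_single]
      simp only [Fin.cons_zero]
      linarith
    | Sum.inr (Sum.inr d) =>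
      rw [show a (Sum.inr (Sum.inr d)) = Fin.cons (-1) (fun i => 1 - σ * (d.1 i : ℝ)) from rfl,
        hdot_cons]
      simp only [Fin.cons_zero, Fin.cons_succ]
      have hexp : (∑ i, (1 - σ * (d.1 i : ℝ)) * k i) = Lfun σ d.1 k := by
        simp only [Lfun, sub_mul, one_mul, Finset.sum_sub_distrib, Finset.mul_sum]
        congr 1
        exact Finset.sum_congr rfl fun i _ => by ring
      rw [hexp]
      linarith [hkd d.1 d.2]
  rw [hg] at hz
  obtain ⟨c, hc, hzc⟩ := hz
  -- split the generators according to the slack coordinate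
  set y : Fin n → ℝ :=
    ∑ j ∈ Finset.univ.filter (fun j => g j 0 = 0), c j • (fun i => g j i.succ) with hy
  set w : Fin n → ℝ :=
    ∑ j ∈ Finset.univ.filter (fun j => ¬ (g j 0 = 0)), c j • (fun i => g j i.succ) with hw
  have htail : ∀ i : Fin n, k i = y i + w i := by
    intro i
    have h1 : k i = (Fin.cons δ k : Fin (n+1) → ℝ) i.succ := by rw [Fin.cons_succ]
    rw [h1, hzc, Finset.sum_apply]
    have h2 : (∑ j : ι, (c j • g j) i.succ)
        = ∑ j : ι, c j • (fun i' : Fin n => g j i'.succ) i := by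
      exact Finset.sum_congr rfl fun j _ => rfl
    rw [h2, ← Finset.sum_filter_add_sum_filter_not Finset.univ (fun j => g j 0 = 0)]
    rw [hy, hw, Finset.sum_apply, Finset.sum_apply]
    rfl
  have hz0 : δ = ∑ j : ι, c j * g j 0 := by
    have h1 : δ = (Fin.cons δ k : Fin (n+1) → ℝ) 0 := by rw [Fin.cons_zero]
    rw [h1, hzc, Finset.sum_apply]
    exact Finset.sum_congr rfl fun j _ => rfl
  refine ⟨y, ⟨fun i => ?_, fun d hd => ?_⟩, fun i => ?_⟩
  · rw [hy, Finset.sum_apply]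
    apply Finset.sum_nonneg
    intro j _
    exact mul_nonneg (hc j) ((hgen j).1 i)
  · rw [hy, Lfun_sum]
    apply Finset.sum_nonpos
    intro j hj
    rw [Finset.mem_filter] at hj
    have := (hgen j).2.2 d hd
    rw [hj.2] at this
    exact mul_nonpos_of_nonneg_of_nonpos (hc j) this
  · have hki : k i - y i = w i := by rw [htail i]; ring
    rw [hki]
    constructor
    · rw [hw, Finset.sum_apply]
      apply Finset.sum_nonneg
      intro j _
      exact mul_nonneg (hc j) ((hgen j).1 i)
    · rw [hw, Finset.sum_apply]
      have hle : ∀ j ∈ Finset.univ.filter (fun j => ¬ (g j 0 = 0)),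
          (c j • (fun i' : Fin n => g j i'.succ)) i ≤ c j * (R * g j 0) := by
        intro j hj
        rw [Finset.mem_filter] at hj
        exact mul_le_mul_of_nonneg_left (hratio j i hj.2) (hc j)
      calc (∑ j ∈ Finset.univ.filter (fun j => ¬ (g j 0 = 0)),
              (c j • (fun i' : Fin n => g j i'.succ)) i)
          ≤ ∑ j ∈ Finset.univ.filter (fun j => ¬ (g j 0 = 0)), c j * (R * g j 0) :=
            Finset.sum_le_sum hle
        _ ≤ ∑ j : ι, c j * (R * g j 0) := by
            apply Finset.sum_le_sum_of_subset_of_nonneg (Finset.filter_subset _ _)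
            intro j _ _
            exact mul_nonneg (hc j) (mul_nonneg hRnonneg (hgen j).2.1)
        _ = R * ∑ j : ι, c j * g j 0 := by
            rw [Finset.mul_sum]
            exact Finset.sum_congr rfl fun j _ => by ring
        _ = R * δ := by rw [← hz0]

end PartIII

-- ============ Part IV : coordinate injectivity ============
section PartIV

variable {n : ℕ}

lemma exists_coord_subset :
    ∀ (r : ℕ) (W : Submodule ℝ (Fin n → ℝ)), Module.finrank ℝ W ≤ r →
      ∃ J : Finset (Fin n), J.card ≤ r ∧ ∀ x ∈ W, (∀ j ∈ J, x j = 0) → x = 0 := by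
  intro r
  induction r with
  | zero =>
    intro W hW
    have hbot : W = ⊥ := by
      have h0 : Module.finrank ℝ W = 0 := le_antisymm hW (Nat.zero_le _)
      exact Submodule.finrank_eq_zero.mp h0
    exact ⟨∅, by simp, fun x hx _ => by rw [hbot] at hx; simpa using hx⟩
  | succ r ih =>
    intro W hW
    by_cases hbot : W = ⊥
    · exact ⟨∅, by simp, fun x hx _ => by rw [hbot] at hx; simpa using hx⟩
    · obtain ⟨w, hwW, hwne⟩ := (Submodule.ne_bot_iff W).mp hbot
      obtain ⟨j, hj⟩ : ∃ j, w j ≠ 0 := by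
        by_contra h; push_neg at h; exact hwne (funext h)
      set W' := W ⊓ LinearMap.ker (LinearMap.proj j : (Fin n → ℝ) →ₗ[ℝ] ℝ) with hW'
      have hlt : W' < W := by
        apply lt_of_le_of_ne inf_le_left
        intro hEq
        rw [← hEq] at hwW
        rw [Submodule.mem_inf, LinearMap.mem_ker, LinearMap.proj_apply] at hwW
        exact hj hwW.2
      have hrank : Module.finrank ℝ W' ≤ r := by
        have := Submodule.finrank_lt_finrank_of_lt hlt
        omega
      obtain ⟨J', hJ'card, hJ'⟩ := ih W' hrank
      refine ⟨insert j J', le_trans (Finset.card_insert_le _ _) (by omega), ?_⟩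
      intro x hxW hxJ
      have hxj : x j = 0 := hxJ j (Finset.mem_insert_self _ _)
      have hxW' : x ∈ W' := by
        rw [hW', Submodule.mem_inf, LinearMap.mem_ker, LinearMap.proj_apply]
        exact ⟨hxW, hxj⟩
      exact hJ' x hxW' (fun j' hj' => hxJ j' (Finset.mem_insert_of_mem hj'))

lemma coord_bound (U : Submodule ℝ (Fin n → ℝ)) (J : Finset (Fin n))
    (hinj : ∀ x ∈ U, (∑ i, x i) = 0 → (∀ j ∈ J, x j = 0) → x = 0) :
    ∃ c₀ : ℝ, 0 ≤ c₀ ∧ ∀ x ∈ U, ∀ i,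
      |x i| ≤ c₀ * (|∑ j, x j| + ∑ j ∈ J, |x j|) := by
  classical
  set νL : (Fin n → ℝ) →ₗ[ℝ] ℝ := ∑ i, LinearMap.proj i with hνL
  have hνLapp : ∀ x : Fin n → ℝ, νL x = ∑ i, x i := by
    intro x
    rw [hνL, LinearMap.sum_apply]
    exact Finset.sum_congr rfl fun i _ => LinearMap.proj_apply _ _
  set ψ : (Fin n → ℝ) →ₗ[ℝ] (Fin (n+1) → ℝ) :=
    LinearMap.pi (fun j => Fin.cases νL
      (fun j' => if j' ∈ J then LinearMap.proj j' else 0) j) with hψ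
  have hψ0 : ∀ x, ψ x 0 = ∑ i, x i := by
    intro x
    rw [hψ, LinearMap.pi_apply]
    rw [show (Fin.cases νL (fun j' => if j' ∈ J then (LinearMap.proj j' :
      (Fin n → ℝ) →ₗ[ℝ] ℝ) else 0) (0 : Fin (n+1))) = νL from rfl]
    exact hνLapp x
  have hψsucc : ∀ x (j' : Fin n), ψ x j'.succ = if j' ∈ J then x j' else 0 := by
    intro x j'
    rw [hψ, LinearMap.pi_apply]
    rw [show (Fin.cases νL (fun j'' => if j'' ∈ J then (LinearMap.proj j'' :
      (Fin n → ℝ) →ₗ[ℝ] ℝ) else 0) (j'.succ)) = (if j' ∈ J then LinearMap.proj j' else 0)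
      from Fin.cases_succ _]
    by_cases h : j' ∈ J
    · rw [if_pos h, if_pos h]; rfl
    · rw [if_neg h, if_neg h]; rfl
  set F : U →ₗ[ℝ] (Fin (n+1) → ℝ) := ψ.domRestrict U with hF
  have hker : LinearMap.ker F = ⊥ := by
    rw [LinearMap.ker_eq_bot']
    intro m hm
    have hm' : ψ (m : Fin n → ℝ) = 0 := hm
    have h0 : (∑ i, (m : Fin n → ℝ) i) = 0 := by
      rw [← hψ0 (m : Fin n → ℝ), hm']; rfl
    have hJ0 : ∀ j ∈ J, (m : Fin n → ℝ) j = 0 := by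
      intro j hjJ
      have := congrFun hm' j.succ
      rw [hψsucc _ j, if_pos hjJ] at this
      exact this
    have := hinj (m : Fin n → ℝ) m.2 h0 hJ0
    exact Subtype.ext this
  obtain ⟨g, hg⟩ := LinearMap.exists_leftInverse_of_injective F hker
  set c₀ : ℝ := ∑ j : Fin (n+1), ∑ i, |((g (Pi.single j 1) : U) : Fin n → ℝ) i| with hc₀
  have hc₀nonneg : 0 ≤ c₀ :=
    Finset.sum_nonneg fun j _ => Finset.sum_nonneg fun i _ => _root_.abs_nonneg _
  refine ⟨c₀, hc₀nonneg, ?_⟩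
  intro x hx i
  set Q := |∑ j, x j| + ∑ j ∈ J, |x j| with hQ
  have hQ0 : 0 ≤ Q := add_nonneg (_root_.abs_nonneg _) (Finset.sum_nonneg fun _ _ => _root_.abs_nonneg _)
  have hxrec : x = ∑ j : Fin (n+1), (ψ x) j • ((g (Pi.single j 1) : U) : Fin n → ℝ) := by
    have h1 : g (F ⟨x, hx⟩) = ⟨x, hx⟩ := by
      have := congrArg (fun (h : U →ₗ[ℝ] U) => h ⟨x, hx⟩) hg
      exact this
    have h2 : F ⟨x, hx⟩ = ψ x := rfl
    have h3 : ψ x = ∑ j : Fin (n+1), (ψ x) j • (Pi.single j (1:ℝ) : Fin (n+1) → ℝ) :=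
      pi_single_sum (ψ x)
    calc x = ((g (ψ x) : U) : Fin n → ℝ) := by rw [← h2, h1]
    _ = ((g (∑ j : Fin (n+1), (ψ x) j • (Pi.single j (1:ℝ) : Fin (n+1) → ℝ)) : U) :
          Fin n → ℝ) := by rw [← h3]
    _ = ∑ j : Fin (n+1), (ψ x) j • ((g (Pi.single j 1) : U) : Fin n → ℝ) := by
        rw [_root_.map_sum]
        rw [Submodule.coe_sum]
        exact Finset.sum_congr rfl fun j _ => by rw [_root_.map_smul]; rfl
  have hψbound : ∀ j : Fin (n+1), |(ψ x) j| ≤ Q := by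
    intro j
    refine Fin.cases ?_ ?_ j
    · rw [hψ0]
      exact le_add_of_le_of_nonneg le_rfl (Finset.sum_nonneg fun _ _ => _root_.abs_nonneg _)
    · intro j'
      rw [hψsucc]
      by_cases h : j' ∈ J
      · rw [if_pos h]
        refine le_add_of_nonneg_of_le (_root_.abs_nonneg _) ?_
        exact Finset.single_le_sum (f := fun j => |x j|) (fun _ _ => _root_.abs_nonneg _) h
      · rw [if_neg h]; simpa using hQ0
  have hxi : |x i| ≤ ∑ j : Fin (n+1), |(ψ x) j| * |((g (Pi.single j 1) : U) : Fin n → ℝ) i| := by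
    conv_lhs => rw [hxrec]
    rw [show ((∑ j : Fin (n+1), (ψ x) j • ((g (Pi.single j 1) : U) : Fin n → ℝ)) i)
      = ∑ j : Fin (n+1), (ψ x) j * ((g (Pi.single j 1) : U) : Fin n → ℝ) i from by
        rw [Finset.sum_apply]; rfl]
    calc |∑ j : Fin (n+1), (ψ x) j * ((g (Pi.single j 1) : U) : Fin n → ℝ) i|
        ≤ ∑ j : Fin (n+1), |(ψ x) j * ((g (Pi.single j 1) : U) : Fin n → ℝ) i| :=
          Finset.abs_sum_le_sum_abs _ _
      _ = ∑ j : Fin (n+1), |(ψ x) j| * |((g (Pi.single j 1) : U) : Fin n → ℝ) i| :=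
          Finset.sum_congr rfl fun j _ => _root_.abs_mul _ _
  calc |x i| ≤ ∑ j : Fin (n+1), |(ψ x) j| * |((g (Pi.single j 1) : U) : Fin n → ℝ) i| := hxi
  _ ≤ ∑ j : Fin (n+1), Q * (∑ i', |((g (Pi.single j 1) : U) : Fin n → ℝ) i'|) := by
      apply Finset.sum_le_sum
      intro j _
      apply mul_le_mul (hψbound j)
        (Finset.single_le_sum (f := fun i' => |((g (Pi.single j 1) : U) : Fin n → ℝ) i'|)
          (fun _ _ => _root_.abs_nonneg _) (Finset.mem_univ i))
        (_root_.abs_nonneg _) hQ0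
  _ = Q * c₀ := by rw [← Finset.mul_sum, hc₀]
  _ = c₀ * Q := mul_comm _ _

end PartIV

-- ============ Part V : lattice point counting ============
section PartV

variable {n : ℕ}

lemma count_bound
    (S : Finset (Fin n →₀ ℕ)) (σ : ℝ) (hσ : 0 < σ)
    (R c₀ : ℝ) (hR : 0 ≤ R) (hc₀ : 0 ≤ c₀)
    (J : Finset (Fin n)) (κ' : ℕ) (hJcard : J.card ≤ κ')
    (hdecomp : ∀ (k : Fin n → ℝ) (δ : ℝ), (∀ i, 0 ≤ k i) → 0 ≤ δ →
      (∀ d ∈ S, Lfun σ d k ≤ δ) →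
      ∃ y, ((∀ i, 0 ≤ y i) ∧ (∀ d ∈ S, Lfun σ d y ≤ 0)) ∧
        ∀ i, 0 ≤ k i - y i ∧ k i - y i ≤ R * δ)
    (hcoord : ∀ y y' : Fin n → ℝ,
      ((∀ i, 0 ≤ y i) ∧ (∀ d ∈ S, Lfun σ d y ≤ 0)) →
      ((∀ i, 0 ≤ y' i) ∧ (∀ d ∈ S, Lfun σ d y' ≤ 0)) →
      ∀ i, |(y - y') i| ≤ c₀ * (|∑ j, (y - y') j| + ∑ j ∈ J, |(y - y') j|))
    (m s : ℕ) (hsm : σ * m ≤ s)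
    (K : Finset (Fin n → ℕ))
    (hK : ∀ k ∈ K, (∑ i, k i) = s ∧
      ∀ d ∈ S, Lfun σ d (fun i => (k i : ℝ)) ≤ (s : ℝ) - σ * m) :
    (K.card : ℝ) ≤ (3 * (R * (2 + 4 * n * c₀) + 1))^n
      * ((s:ℝ) - σ * m + 1)^n * ((s:ℝ)+1)^κ' := by
  classical
  set t : ℝ := (s:ℝ) - σ * m with ht
  have ht0 : 0 ≤ t := by rw [ht]; linarith
  set c₂ : ℝ := R * (2 + 4 * n * c₀) with hc₂
  have hc₂0 : 0 ≤ c₂ := by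
    apply mul_nonneg hR
    have : (0:ℝ) ≤ 4 * n * c₀ := by positivity
    linarith
  have hy : ∀ k ∈ K, ∃ y, ((∀ i, 0 ≤ y i) ∧ (∀ d ∈ S, Lfun σ d y ≤ 0)) ∧
      ∀ i, 0 ≤ (k i : ℝ) - y i ∧ (k i : ℝ) - y i ≤ R * t := by
    intro k hk
    exact hdecomp (fun i => (k i : ℝ)) t (fun i => by positivity) ht0 (hK k hk).2
  set prj : (Fin n → ℕ) → (Fin n → ℕ) := fun k i => if i ∈ J then k i else 0 with hprj
  set B := K.image prj with hB
  have hcardsum : K.card = ∑ b ∈ B, (K.filter (fun k => prj k = b)).card :=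
    Finset.card_eq_sum_card_fiberwise (fun k hk => Finset.mem_image_of_mem prj hk)
  -- bound on the number of fibers
  have hBcard : (B.card : ℝ) ≤ ((s:ℝ)+1)^κ' := by
    have hsub : B ⊆ Fintype.piFinset
        (fun i => if i ∈ J then Finset.range (s+1) else ({0} : Finset ℕ)) := by
      intro b hb
      rw [hB, Finset.mem_image] at hb
      obtain ⟨k, hk, rfl⟩ := hb
      rw [Fintype.mem_piFinset]
      intro i
      by_cases hiJ : i ∈ J
      · rw [if_pos hiJ]
        have hprjk : prj k i = k i := by rw [hprj]; simp [hiJ]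
        rw [hprjk, Finset.mem_range]
        have hle : k i ≤ ∑ i', k i' :=
          Finset.single_le_sum (f := fun i' => k i') (fun _ _ => Nat.zero_le _)
            (Finset.mem_univ i)
        rw [(hK k hk).1] at hle
        omega
      · rw [if_neg hiJ]
        have hprjk : prj k i = 0 := by rw [hprj]; simp [hiJ]
        rw [hprjk]; exact Finset.mem_singleton_self 0
    have hcard2 : (Fintype.piFinset
        (fun i => if i ∈ J then Finset.range (s+1) else ({0} : Finset ℕ))).card
        = (s+1)^J.card := by
      rw [Fintype.card_piFinset]
      have hcongr : ∀ i : Fin n,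
          ((if i ∈ J then Finset.range (s+1) else ({0} : Finset ℕ))).card
          = if i ∈ J then s+1 else 1 := by
        intro i; by_cases h : i ∈ J <;> simp [h]
      rw [Finset.prod_congr rfl (fun i _ => hcongr i)]
      rw [← Finset.prod_filter_mul_prod_filter_not Finset.univ (fun i => i ∈ J)]
      have hfil : Finset.univ.filter (fun i : Fin n => i ∈ J) = J := by
        ext i; simp
      have h1 : (∏ i ∈ Finset.univ.filter (fun i : Fin n => i ∈ J),
          (if i ∈ J then s+1 else 1)) = (s+1)^J.card := by
        rw [hfil]
        rw [Finset.prod_congr rfl (fun i hi => if_pos hi)]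
        exact Finset.prod_const _
      have h2 : (∏ i ∈ Finset.univ.filter (fun i : Fin n => ¬ i ∈ J),
          (if i ∈ J then s+1 else 1)) = 1 := by
        apply Finset.prod_eq_one
        intro i hi
        rw [Finset.mem_filter] at hi
        exact if_neg hi.2
      rw [h1, h2, mul_one]
    have : B.card ≤ (s+1)^J.card := by
      rw [← hcard2]; exact Finset.card_le_card hsub
    have hb1 : (B.card : ℝ) ≤ ((s:ℝ)+1)^J.card := by
      have := this
      calc (B.card : ℝ) ≤ (((s+1)^J.card : ℕ) : ℝ) := by exact_mod_cast this
      _ = ((s:ℝ)+1)^J.card := by push_cast; ring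
    have hb2 : ((s:ℝ)+1)^J.card ≤ ((s:ℝ)+1)^κ' := by
      apply pow_le_pow_right₀ ?_ hJcard
      have : (0:ℝ) ≤ (s:ℝ) := Nat.cast_nonneg s
      linarith
    exact le_trans hb1 hb2
  -- bound on each fiber
  have hfiber : ∀ b ∈ B, ((K.filter (fun k => prj k = b)).card : ℝ)
      ≤ (3 * (c₂ + 1))^n * (t+1)^n := by
    intro b _
    set Fb := K.filter (fun k => prj k = b) with hFb
    rcases Finset.eq_empty_or_nonempty Fb with hempty | hne
    · rw [hempty]; simp only [Finset.card_empty, Nat.cast_zero]; positivity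
    · obtain ⟨kstar, hkstar⟩ := hne
      have hkstarK : kstar ∈ K := (Finset.mem_filter.mp hkstar).1
      -- all fiber elements are close to kstar
      have hclose : ∀ k ∈ Fb, ∀ i, |(k i : ℝ) - (kstar i : ℝ)| ≤ c₂ * t := by
        intro k hk i
        have hkK : k ∈ K := (Finset.mem_filter.mp hk).1
        obtain ⟨y, hyE, hyb⟩ := hy k hkK
        obtain ⟨y', hy'E, hy'b⟩ := hy kstar hkstarK
        have hcb := hcoord y y' hyE hy'E
        -- sum bound
        have hsumy : (∑ j, y j) = (s:ℝ) - ∑ j, ((k j : ℝ) - y j) := by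
          have h1 : (∑ j, ((k j:ℝ) - y j)) = (∑ j, (k j:ℝ)) - ∑ j, y j :=
            Finset.sum_sub_distrib _ _
          have h2 : (∑ j, (k j:ℝ)) = (s:ℝ) := by
            rw [← Nat.cast_sum, (hK k hkK).1]
          rw [h1, h2]; ring
        have hsumy' : (∑ j, y' j) = (s:ℝ) - ∑ j, ((kstar j : ℝ) - y' j) := by
          have h1 : (∑ j, ((kstar j:ℝ) - y' j)) = (∑ j, (kstar j:ℝ)) - ∑ j, y' j :=
            Finset.sum_sub_distrib _ _
          have h2 : (∑ j, (kstar j:ℝ)) = (s:ℝ) := by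
            rw [← Nat.cast_sum, (hK kstar hkstarK).1]
          rw [h1, h2]; ring
        have hsumbd : |∑ j, (y - y') j| ≤ 2 * n * (R * t) := by
          have hexp : (∑ j, (y - y') j) = (∑ j, ((kstar j:ℝ) - y' j)) - ∑ j, ((k j:ℝ) - y j) := by
            have : (∑ j, (y - y') j) = (∑ j, y j) - ∑ j, y' j := by
              rw [← Finset.sum_sub_distrib]
              exact Finset.sum_congr rfl fun j _ => rfl
            rw [this, hsumy, hsumy']; ring
          rw [hexp]
          have hb1 : |∑ j, ((k j:ℝ) - y j)| ≤ n * (R * t) := by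
            calc |∑ j, ((k j:ℝ) - y j)| ≤ ∑ j, |(k j:ℝ) - y j| :=
                Finset.abs_sum_le_sum_abs _ _
            _ ≤ ∑ j : Fin n, R * t := Finset.sum_le_sum (fun j _ => by
                rw [_root_.abs_of_nonneg (hyb j).1]; exact (hyb j).2)
            _ = n * (R * t) := by rw [Finset.sum_const]; simp [mul_comm]
          have hb2 : |∑ j, ((kstar j:ℝ) - y' j)| ≤ n * (R * t) := by
            calc |∑ j, ((kstar j:ℝ) - y' j)| ≤ ∑ j, |(kstar j:ℝ) - y' j| :=
                Finset.abs_sum_le_sum_abs _ _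
            _ ≤ ∑ j : Fin n, R * t := Finset.sum_le_sum (fun j _ => by
                rw [_root_.abs_of_nonneg (hy'b j).1]; exact (hy'b j).2)
            _ = n * (R * t) := by rw [Finset.sum_const]; simp [mul_comm]
          calc |(∑ j, ((kstar j:ℝ) - y' j)) - ∑ j, ((k j:ℝ) - y j)|
              ≤ |∑ j, ((kstar j:ℝ) - y' j)| + |∑ j, ((k j:ℝ) - y j)| := _root_.abs_sub _ _
          _ ≤ n * (R * t) + n * (R * t) := add_le_add hb2 hb1
          _ = 2 * n * (R * t) := by ring
        have hJbd : (∑ j ∈ J, |(y - y') j|) ≤ n * (2 * (R * t)) := by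
          have hjeq : ∀ j ∈ J, |(y - y') j| ≤ 2 * (R * t) := by
            intro j hjJ
            have hkj : k j = kstar j := by
              have h1 : prj k = b := (Finset.mem_filter.mp hk).2
              have h2 : prj kstar = b := (Finset.mem_filter.mp hkstar).2
              have := congrFun (h1.trans h2.symm) j
              rw [hprj] at this
              simpa [if_pos hjJ] using this
            have hexpj : (y - y') j = ((kstar j:ℝ) - y' j) - ((k j:ℝ) - y j) := by
              have : ((k j:ℝ)) = ((kstar j:ℝ)) := by exact_mod_cast hkj
              simp only [Pi.sub_apply]
              rw [this]; ring
            rw [hexpj]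
            calc |((kstar j:ℝ) - y' j) - ((k j:ℝ) - y j)|
                ≤ |(kstar j:ℝ) - y' j| + |(k j:ℝ) - y j| := _root_.abs_sub _ _
            _ ≤ R * t + R * t := add_le_add
                (by rw [_root_.abs_of_nonneg (hy'b j).1]; exact (hy'b j).2)
                (by rw [_root_.abs_of_nonneg (hyb j).1]; exact (hyb j).2)
            _ = 2 * (R * t) := by ring
          calc (∑ j ∈ J, |(y - y') j|) ≤ ∑ j ∈ J, 2 * (R * t) :=
              Finset.sum_le_sum hjeq
          _ = J.card * (2 * (R * t)) := by rw [Finset.sum_const]; simp [mul_comm]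
          _ ≤ n * (2 * (R * t)) := by
              have hJn : (J.card : ℝ) ≤ n := by
                have := Finset.card_le_card (Finset.subset_univ J)
                rw [Finset.card_univ, Fintype.card_fin] at this
                exact_mod_cast this
              apply mul_le_mul_of_nonneg_right hJn (by positivity)
        have hxi := hcb i
        have hxibd : |(y - y') i| ≤ 4 * n * c₀ * (R * t) := by
          calc |(y - y') i| ≤ c₀ * (|∑ j, (y - y') j| + ∑ j ∈ J, |(y - y') j|) := hxi
          _ ≤ c₀ * (2 * n * (R * t) + n * (2 * (R * t))) := by
              apply mul_le_mul_of_nonneg_left (add_le_add hsumbd hJbd) hc₀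
          _ = 4 * n * c₀ * (R * t) := by ring
        have hfinal : (k i:ℝ) - (kstar i:ℝ)
            = ((k i:ℝ) - y i) + (y - y') i - ((kstar i:ℝ) - y' i) := by
          simp only [Pi.sub_apply]; ring
        rw [hfinal]
        calc |((k i:ℝ) - y i) + (y - y') i - ((kstar i:ℝ) - y' i)|
            ≤ |((k i:ℝ) - y i) + (y - y') i| + |(kstar i:ℝ) - y' i| := _root_.abs_sub _ _
        _ ≤ (|(k i:ℝ) - y i| + |(y - y') i|) + |(kstar i:ℝ) - y' i| :=
            add_le_add_left (abs_add_le _ _) _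
        _ ≤ (R * t + 4 * n * c₀ * (R * t)) + R * t := by
            refine add_le_add (add_le_add ?_ hxibd) ?_
            · rw [_root_.abs_of_nonneg (hyb i).1]; exact (hyb i).2
            · rw [_root_.abs_of_nonneg (hy'b i).1]; exact (hy'b i).2
        _ = c₂ * t := by rw [hc₂]; ring
      -- fiber is inside a small box
      set qq : ℕ := ⌈c₂ * t⌉₊ with hqq
      have hsubbox : Fb ⊆ Fintype.piFinset
          (fun i => Finset.Icc (kstar i - qq) (kstar i + qq)) := by
        intro k hk
        rw [Fintype.mem_piFinset]
        intro i
        rw [Finset.mem_Icc]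
        have hci := hclose k hk i
        have hceil : c₂ * t ≤ (qq : ℝ) := Nat.le_ceil _
        have habs := _root_.abs_le.mp (le_trans hci hceil)
        constructor
        · have : (kstar i : ℝ) ≤ (k i : ℝ) + qq := by linarith [habs.1]
          have : kstar i ≤ k i + qq := by exact_mod_cast this
          omega
        · have : (k i : ℝ) ≤ (kstar i : ℝ) + qq := by linarith [habs.2]
          have : k i ≤ kstar i + qq := by exact_mod_cast this
          omega
      have hboxcard : (Fintype.piFinset
          (fun i => Finset.Icc (kstar i - qq) (kstar i + qq))).card ≤ (2*qq+1)^n := by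
        rw [Fintype.card_piFinset]
        calc (∏ i, (Finset.Icc (kstar i - qq) (kstar i + qq)).card)
            ≤ ∏ _i : Fin n, (2*qq+1) := by
              apply Finset.prod_le_prod'
              intro i _
              rw [Nat.card_Icc]
              omega
        _ = (2*qq+1)^n := by rw [Finset.prod_const]; simp
      have hqbd : ((2*qq+1 : ℕ) : ℝ) ≤ 3 * (c₂+1) * (t+1) := by
        have h1 : (qq:ℝ) < c₂ * t + 1 := Nat.ceil_lt_add_one (by positivity)
        push_cast
        nlinarith [mul_nonneg hc₂0 ht0]
      have hstep1 : ((Fb.card : ℕ) : ℝ) ≤ (((2*qq+1)^n : ℕ) : ℝ) := by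
        exact_mod_cast le_trans (Finset.card_le_card hsubbox) hboxcard
      have hstep2 : (((2*qq+1)^n : ℕ) : ℝ) = (((2*qq+1):ℕ):ℝ)^n := by push_cast; ring
      have hstep3 : (((2*qq+1):ℕ):ℝ)^n ≤ (3 * (c₂+1) * (t+1))^n :=
        pow_le_pow_left₀ (by positivity) hqbd n
      have hstep4 : (3 * (c₂+1) * (t+1))^n = (3 * (c₂+1))^n * (t+1)^n := mul_pow _ _ _
      calc ((Fb.card : ℕ) : ℝ) ≤ (((2*qq+1):ℕ):ℝ)^n := by rw [← hstep2]; exact hstep1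
      _ ≤ (3 * (c₂+1))^n * (t+1)^n := by rw [← hstep4]; exact hstep3
  -- assemble
  have hX0 : (0:ℝ) ≤ (3 * (c₂+1))^n * (t+1)^n := by positivity
  have h2 : (K.card : ℝ) ≤ (B.card : ℝ) * ((3 * (c₂+1))^n * (t+1)^n) := by
    rw [hcardsum]
    push_cast
    calc ∑ b ∈ B, ((K.filter (fun k => prj k = b)).card : ℝ)
        ≤ ∑ _b ∈ B, (3 * (c₂+1))^n * (t+1)^n := Finset.sum_le_sum hfiber
    _ = (B.card : ℝ) * ((3 * (c₂+1))^n * (t+1)^n) := by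
        rw [Finset.sum_const, nsmul_eq_mul]
  have h4 : (B.card:ℝ) * ((3 * (c₂+1))^n * (t+1)^n)
      ≤ ((s:ℝ)+1)^κ' * ((3 * (c₂+1))^n * (t+1)^n) :=
    mul_le_mul_of_nonneg_right hBcard hX0
  have h5 : ((s:ℝ)+1)^κ' * ((3 * (c₂+1))^n * (t+1)^n)
      = (3 * (c₂ + 1))^n * (t + 1)^n * ((s:ℝ)+1)^κ' := by ring
  have h6 := le_trans h2 h4
  rw [h5] at h6
  exact h6

end PartV

set_option maxHeartbeats 2000000 in
/-- bound `A(p,m,τ) ≤ c p^{-mσ} m^{κ-1}` for large `p`,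
uniformly in the faces `τ`, together with `κ ≥ 1`. -/
theorem A_bound
    (n : ℕ) (f : MvPolynomial (Fin n) ℤ) (hf : f ≠ 0)
    (hf0 : constantCoeff f = 0) (hnd : Nondeg f)
    (σ : ℝ) (hσ : 0 < σ)
    (hfirst : IsLeast {t : ℝ | 0 ≤ t ∧ (fun _ : Fin n => t) ∈ NewtonΔ f} (1 / σ))
    (κ : ℕ)
    (hκ : κ = Module.finrank ℝ (vectorSpan ℝ
      {k : Fin n → ℝ | (∀ i, 0 ≤ k i) ∧ ∑ i, k i = σ * Nfun (NewtonΔ f) k})) :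
    1 ≤ κ ∧ ∃ c : ℝ, 0 < c ∧ ∃ M : ℕ,
      ∀ m : ℕ, 0 < m → ∀ τ : Set (Fin n → ℝ), IsFaceOf (NewtonΔ f) τ →
        ∀ p : ℕ, p.Prime → M < p →
          Afun f p m τ ≤ c * (p : ℝ) ^ (-(m : ℝ) * σ) * (m : ℝ) ^ (κ - 1) := by
  classical
  -- n = 0 is impossible
  rcases Nat.eq_zero_or_pos n with hn0 | hn
  · exfalso
    subst hn0
    apply hf
    apply MvPolynomial.ext
    intro mm
    have hmm : mm = 0 := by
      ext i
      exact i.elim0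
    rw [hmm]
    simpa [MvPolynomial.constantCoeff_eq] using hf0
  have hS : f.support.Nonempty :=
    Finset.nonempty_iff_ne_empty.mpr (fun h => hf (MvPolynomial.support_eq_empty.mp h))
  have hdiag : (fun _ : Fin n => 1/σ) ∈ NewtonΔ f := hfirst.1.2
  set Eset : Set (Fin n → ℝ) :=
    {k : Fin n → ℝ | (∀ i, 0 ≤ k i) ∧ ∑ i, k i = σ * Nfun (NewtonΔ f) k} with hEset
  -- characterization of Eset by finitely many linear inequalities
  have hEchar : ∀ k : Fin n → ℝ, (∀ i, 0 ≤ k i) →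
      (k ∈ Eset ↔ ∀ d ∈ f.support, Lfun σ d k ≤ 0) := by
    intro k hk
    rw [hEset, Set.mem_setOf_eq, Nfun_eq_NminS f hS k hk]
    constructor
    · rintro ⟨-, heq⟩ d hd
      have h1 : NminS f.support hS k ≤ ∑ i, k i * (d i : ℝ) := NminS_le f.support hS k hd
      rw [Lfun, heq]
      nlinarith
    · intro hall
      refine ⟨hk, le_antisymm ?_ ?_⟩
      · obtain ⟨d0, hd0, heq0⟩ := exists_NminS f.support hS k
        have := hall d0 hd0
        rw [Lfun] at this
        rw [heq0]
        linarith
      · exact sigma_NminS_le f hS hσ hdiag k hk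
  -- the nonzero element of Eset
  obtain ⟨a0, ha0nn, ha0pos, ha0d⟩ := exists_k0 f hS hσ hn hfirst
  have ha0E : a0 ∈ Eset := by
    rw [hEchar a0 ha0nn]
    intro d hd
    rw [Lfun]
    linarith [ha0d d hd]
  have h0E : (0 : Fin n → ℝ) ∈ Eset := by
    rw [hEchar 0 (fun i => le_refl 0)]
    intro d hd
    rw [Lfun]
    simp
  set U := vectorSpan ℝ Eset with hU
  have ha0U : a0 ∈ U := by
    have := vsub_mem_vectorSpan ℝ ha0E h0E
    simpa using this
  have ha0ne : a0 ≠ 0 := by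
    intro h
    rw [h] at ha0pos
    simp at ha0pos
  -- κ ≥ 1
  have hκ1 : 1 ≤ κ := by
    rw [hκ]
    have : Nontrivial U := by
      refine ⟨⟨a0, ha0U⟩, 0, ?_⟩
      intro hcontra
      apply ha0ne
      exact congrArg Subtype.val hcontra
    have := Module.finrank_pos_iff (R := ℝ) (M := U) |>.mpr this
    omega
  refine ⟨hκ1, ?_⟩
  -- the subspace W and the coordinate set J
  set νL : (Fin n → ℝ) →ₗ[ℝ] ℝ := ∑ i, LinearMap.proj i with hνL
  have hνLapp : ∀ x : Fin n → ℝ, νL x = ∑ i, x i := by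
    intro x
    rw [hνL, LinearMap.sum_apply]
    exact Finset.sum_congr rfl fun i _ => LinearMap.proj_apply _ _
  set W := U ⊓ LinearMap.ker νL with hW
  have hWlt : W < U := by
    apply lt_of_le_of_ne inf_le_left
    intro hEq
    rw [← hEq] at ha0U
    rw [Submodule.mem_inf, LinearMap.mem_ker, hνLapp] at ha0U
    linarith [ha0U.2]
  have hWrank : Module.finrank ℝ W ≤ κ - 1 := by
    have h1 := Submodule.finrank_lt_finrank_of_lt hWlt
    rw [← hκ] at h1
    omega
  obtain ⟨J, hJcard, hJprop⟩ := exists_coord_subset (κ - 1) W hWrank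
  -- quantitative injectivity constant
  obtain ⟨c₀, hc₀, hc₀prop⟩ := coord_bound U J (by
    intro x hxU hxsum hxJ
    apply hJprop x ?_ hxJ
    rw [hW, Submodule.mem_inf, LinearMap.mem_ker, hνLapp]
    exact ⟨hxU, hxsum⟩)
  -- decomposition constant
  obtain ⟨R, hR, hdecomp⟩ := decomposition f.support σ
  -- constants for the series
  set C₀ : ℝ := (3 * (R * (2 + 4 * n * c₀) + 1))^n with hC₀
  have hC₀0 : 0 ≤ C₀ := by positivity
  set d₁ : ℕ := n + (κ - 1) with hd₁
  set G : ℕ → ℝ := fun j => ((j:ℝ)+2)^d₁ * (2⁻¹:ℝ)^j with hG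
  have hGnonneg : ∀ j, 0 ≤ G j := by
    intro j; rw [hG]; positivity
  have hGsummable : Summable G := by
    have hbase : Summable (fun j : ℕ => (j:ℝ)^d₁ * (2⁻¹:ℝ)^j) := by
      have : ‖(2⁻¹ : ℝ)‖ < 1 := by rw [Real.norm_eq_abs]; rw [_root_.abs_of_pos] <;> norm_num
      exact summable_pow_mul_geometric_of_norm_lt_one d₁ this
    have hshift : Summable (fun j : ℕ => ((j+2:ℕ):ℝ)^d₁ * (2⁻¹:ℝ)^(j+2)) :=
      (summable_nat_add_iff 2).mpr hbase
    have hmul := hshift.mul_left (4:ℝ)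
    apply Summable.congr hmul
    intro j
    rw [hG]
    push_cast
    ring
  set Gs : ℝ := ∑' j, G j with hGs
  have hGs0 : 0 ≤ Gs := tsum_nonneg hGnonneg
  set c : ℝ := C₀ * (σ+2)^(κ-1) * Gs + 1 with hc
  have hcpos : 0 < c := by
    rw [hc]
    have : 0 ≤ C₀ * (σ+2)^(κ-1) * Gs := by positivity
    linarith
  refine ⟨c, hcpos, 1, ?_⟩
  intro m hm τ hτ p hp hpM
  have hp2 : (2:ℝ) ≤ (p:ℝ) := by exact_mod_cast hp.two_le
  have hp1 : (1:ℝ) ≤ (p:ℝ) := by linarith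
  have hp0 : (0:ℝ) < (p:ℝ) := by linarith
  have hm1 : (1:ℝ) ≤ (m:ℝ) := by exact_mod_cast hm
  -- nonnegativity of the target bound
  have hrhs0 : 0 ≤ c * (p:ℝ) ^ (-(m:ℝ) * σ) * (m:ℝ) ^ (κ-1) := by
    apply mul_nonneg (mul_nonneg (le_of_lt hcpos) (le_of_lt (Real.rpow_pos_of_pos hp0 _)))
    positivity
  rw [Afun]
  apply tsum_le_of_sum_le' hrhs0
  intro F
  -- reduce to the filtered sum
  have hgoal1 : (∑ k ∈ F, (if (Ffun (NewtonΔ f) (fun i => (k i:ℝ)) = τ ∧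
        (m:ℝ) ≤ Nfun (NewtonΔ f) (fun i => (k i:ℝ))) then ((p:ℝ)^(∑ i, k i))⁻¹ else 0))
      = ∑ k ∈ F.filter (fun k => Ffun (NewtonΔ f) (fun i => (k i:ℝ)) = τ ∧
        (m:ℝ) ≤ Nfun (NewtonΔ f) (fun i => (k i:ℝ))), ((p:ℝ)^(∑ i, k i))⁻¹ :=
    (Finset.sum_filter _ _).symm
  rw [hgoal1]
  set F' := F.filter (fun k => Ffun (NewtonΔ f) (fun i => (k i:ℝ)) = τ ∧
    (m:ℝ) ≤ Nfun (NewtonΔ f) (fun i => (k i:ℝ))) with hF'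
  have hmem : ∀ k ∈ F', (m:ℝ) ≤ NminS f.support hS (fun i => (k i:ℝ)) := by
    intro k hk
    have h := (Finset.mem_filter.mp hk).2.2
    rwa [Nfun_eq_NminS f hS _ (fun i => by positivity)] at h
  set νk : (Fin n → ℕ) → ℕ := fun k => ∑ i, k i with hνk
  set img := F'.image νk with himg
  have hfib : (∑ sv ∈ img, ∑ k ∈ F'.filter (fun k => νk k = sv), ((p:ℝ)^(∑ i, k i))⁻¹)
      = ∑ k ∈ F', ((p:ℝ)^(∑ i, k i))⁻¹ :=
    Finset.sum_fiberwise_of_maps_to (fun k hk => Finset.mem_image_of_mem νk hk) _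
  rw [← hfib]
  -- inner sums are constant
  have hinner : ∀ sv ∈ img, (∑ k ∈ F'.filter (fun k => νk k = sv), ((p:ℝ)^(∑ i, k i))⁻¹)
      = ((F'.filter (fun k => νk k = sv)).card : ℝ) * ((p:ℝ)^sv)⁻¹ := by
    intro sv _
    rw [Finset.sum_congr rfl (fun k hk => by
      rw [show (∑ i, k i) = sv from (Finset.mem_filter.mp hk).2])]
    rw [Finset.sum_const, nsmul_eq_mul]
  -- basic facts about values in img
  have himgle : ∀ sv ∈ img, σ * (m:ℝ) ≤ (sv:ℝ) := by
    intro sv hsv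
    obtain ⟨k₁, hk₁, hk₁s⟩ := Finset.mem_image.mp hsv
    have h1 := hmem k₁ hk₁
    have h2 := sigma_NminS_le f hS hσ hdiag (fun i => (k₁ i:ℝ)) (fun i => by positivity)
    have h3 : (∑ i, ((k₁ i:ℕ):ℝ)) = (sv:ℝ) := by
      rw [← Nat.cast_sum]
      exact_mod_cast congrArg (fun x : ℕ => (x:ℝ)) hk₁s
    rw [h3] at h2
    have h4 := mul_le_mul_of_nonneg_left h1 (le_of_lt hσ)
    linarith
  set s₀ : ℕ := Nat.ceil (σ * (m:ℝ)) with hs₀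
  have hs₀le : σ * (m:ℝ) ≤ (s₀:ℝ) := Nat.le_ceil _
  have hs₀lt : (s₀:ℝ) < σ * (m:ℝ) + 1 := Nat.ceil_lt_add_one (by positivity)
  have himgge : ∀ sv ∈ img, s₀ ≤ sv := by
    intro sv hsv
    exact Nat.ceil_le.mpr (himgle sv hsv)
  -- the per-value bound
  set cpack : ℝ := C₀ * (σ+2)^(κ-1) * (m:ℝ)^(κ-1) * (p:ℝ)^(-(m:ℝ)*σ) with hcpack
  have hcpack0 : 0 ≤ cpack := by
    rw [hcpack]
    have := Real.rpow_pos_of_pos hp0 (-(m:ℝ)*σ)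
    positivity
  have hterm : ∀ sv ∈ img, ((F'.filter (fun k => νk k = sv)).card : ℝ) * ((p:ℝ)^sv)⁻¹
      ≤ cpack * G (sv - s₀) := by
    intro sv hsv
    have hσm_le : σ * (m:ℝ) ≤ (sv:ℝ) := himgle sv hsv
    have hs₀sv : s₀ ≤ sv := himgge sv hsv
    set j : ℕ := sv - s₀ with hj
    have hsvj : sv = s₀ + j := by omega
    have hsvr : (sv:ℝ) = (s₀:ℝ) + (j:ℝ) := by exact_mod_cast congrArg (fun x : ℕ => (x:ℝ)) hsvj
    -- the counting bound
    have hcount : ((F'.filter (fun k => νk k = sv)).card : ℝ)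
        ≤ C₀ * ((sv:ℝ) - σ*(m:ℝ) + 1)^n * ((sv:ℝ)+1)^(κ-1) := by
      have := count_bound f.support σ hσ R c₀ hR hc₀ J (κ-1) hJcard hdecomp
        (by
          intro y y' hyE hy'E
          have hyEs : y ∈ Eset := (hEchar y hyE.1).mpr hyE.2
          have hy'Es : y' ∈ Eset := (hEchar y' hy'E.1).mpr hy'E.2
          have hmemU : y - y' ∈ U := by
            have := vsub_mem_vectorSpan ℝ hyEs hy'Es
            simpa using this
          exact hc₀prop (y - y') hmemU)
        m sv hσm_le (F'.filter (fun k => νk k = sv))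
        (by
          intro k hk
          have hkF' : k ∈ F' := (Finset.mem_filter.mp hk).1
          have hks : (∑ i, k i) = sv := (Finset.mem_filter.mp hk).2
          refine ⟨hks, ?_⟩
          intro d hd
          have hcast : (∑ i, ((k i:ℕ):ℝ)) = (sv:ℝ) := by
            rw [← Nat.cast_sum]
            exact_mod_cast congrArg (fun x : ℕ => (x:ℝ)) hks
          have hmin := hmem k hkF'
          have hmle : NminS f.support hS (fun i => (k i:ℝ)) ≤ ∑ i, (k i:ℝ) * (d i:ℝ) :=
            NminS_le f.support hS _ hd
          rw [Lfun, hcast]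
          have : σ * (m:ℝ) ≤ σ * ∑ i, (k i:ℝ) * (d i:ℝ) := by
            apply mul_le_mul_of_nonneg_left (le_trans hmin hmle) (le_of_lt hσ)
          linarith)
      rw [← hC₀] at this
      exact this
    -- pieces
    have hti : (0:ℝ) ≤ (sv:ℝ) - σ*(m:ℝ) := by linarith
    have hi1 : ((sv:ℝ) - σ*(m:ℝ) + 1)^n ≤ ((j:ℝ)+2)^n := by
      apply pow_le_pow_left₀ (by linarith)
      rw [hsvr]
      linarith
    have hi2 : ((sv:ℝ)+1)^(κ-1) ≤ (σ+2)^(κ-1) * (m:ℝ)^(κ-1) * ((j:ℝ)+1)^(κ-1) := by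
      rw [← mul_pow, ← mul_pow]
      apply pow_le_pow_left₀ (by positivity)
      have hj0 : (0:ℝ) ≤ (j:ℝ) := Nat.cast_nonneg j
      nlinarith
    have hi3 : ((p:ℝ)^sv)⁻¹ = ((p:ℝ)^s₀)⁻¹ * ((p:ℝ)^j)⁻¹ := by
      rw [hsvj, pow_add, mul_inv]
    have hi4 : ((p:ℝ)^s₀)⁻¹ ≤ (p:ℝ)^(-(m:ℝ)*σ) := by
      have h1 : ((p:ℝ)^s₀)⁻¹ = (p:ℝ)^(-(s₀:ℝ)) := by
        rw [← Real.rpow_natCast (p:ℝ) s₀, ← Real.rpow_neg (le_of_lt hp0)]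
      rw [h1]
      apply Real.rpow_le_rpow_of_exponent_le hp1
      have : (m:ℝ) * σ ≤ (s₀:ℝ) := by rw [mul_comm]; exact hs₀le
      linarith
    have hi5 : ((p:ℝ)^j)⁻¹ ≤ (2⁻¹:ℝ)^j := by
      rw [← inv_pow]
      apply pow_le_pow_left₀ (by positivity)
      exact inv_anti₀ (by norm_num) hp2
    have hi6 : ((j:ℝ)+1)^(κ-1) * ((j:ℝ)+2)^n ≤ ((j:ℝ)+2)^d₁ := by
      rw [hd₁, pow_add]
      rw [mul_comm (((j:ℝ)+2)^n) _]
      apply mul_le_mul_of_nonneg_right ?_ (by positivity)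
      apply pow_le_pow_left₀ (by positivity)
      linarith
    have hpinv0 : (0:ℝ) ≤ ((p:ℝ)^s₀)⁻¹ * ((p:ℝ)^j)⁻¹ := by positivity
    calc ((F'.filter (fun k => νk k = sv)).card : ℝ) * ((p:ℝ)^sv)⁻¹
        ≤ (C₀ * ((sv:ℝ) - σ*(m:ℝ) + 1)^n * ((sv:ℝ)+1)^(κ-1))
            * (((p:ℝ)^s₀)⁻¹ * ((p:ℝ)^j)⁻¹) := by
          rw [← hi3]
          exact mul_le_mul_of_nonneg_right hcount (by positivity)
    _ ≤ (C₀ * ((j:ℝ)+2)^n * ((σ+2)^(κ-1) * (m:ℝ)^(κ-1) * ((j:ℝ)+1)^(κ-1)))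
            * ((p:ℝ)^(-(m:ℝ)*σ) * (2⁻¹:ℝ)^j) := by
          apply mul_le_mul
          · apply mul_le_mul
            · exact mul_le_mul_of_nonneg_left hi1 hC₀0
            · exact hi2
            · positivity
            · positivity
          · apply mul_le_mul hi4 hi5 (by positivity)
            exact le_of_lt (Real.rpow_pos_of_pos hp0 _)
          · exact hpinv0
          · positivity
    _ = cpack * (((j:ℝ)+1)^(κ-1) * ((j:ℝ)+2)^n * (2⁻¹:ℝ)^j) := by
          rw [hcpack]; ring
    _ ≤ cpack * (((j:ℝ)+2)^d₁ * (2⁻¹:ℝ)^j) := by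
          apply mul_le_mul_of_nonneg_left ?_ hcpack0
          exact mul_le_mul_of_nonneg_right hi6 (by positivity)
    _ = cpack * G j := by rw [hG]
  -- sum everything
  have hsum2 : (∑ sv ∈ img, G (sv - s₀)) ≤ Gs := by
    have hinj : ∀ x ∈ img, ∀ y ∈ img, x - s₀ = y - s₀ → x = y := by
      intro x hx y hy hxy
      have h1 := himgge x hx
      have h2 := himgge y hy
      omega
    have heq : (∑ jv ∈ img.image (fun sv => sv - s₀), G jv)
        = ∑ sv ∈ img, G (sv - s₀) := Finset.sum_image hinj
    rw [← heq, hGs]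
    exact Summable.sum_le_tsum _ (fun jv _ => hGnonneg jv) hGsummable
  calc (∑ sv ∈ img, ∑ k ∈ F'.filter (fun k => νk k = sv), ((p:ℝ)^(∑ i, k i))⁻¹)
      = ∑ sv ∈ img, ((F'.filter (fun k => νk k = sv)).card : ℝ) * ((p:ℝ)^sv)⁻¹ :=
        Finset.sum_congr rfl hinner
  _ ≤ ∑ sv ∈ img, cpack * G (sv - s₀) := Finset.sum_le_sum hterm
  _ = cpack * ∑ sv ∈ img, G (sv - s₀) := by rw [Finset.mul_sum]
  _ ≤ cpack * Gs := mul_le_mul_of_nonneg_left hsum2 hcpack0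
  _ ≤ c * (p:ℝ)^(-(m:ℝ)*σ) * (m:ℝ)^(κ-1) := by
      rw [hcpack, hc]
      have hrp : (0:ℝ) ≤ (p:ℝ)^(-(m:ℝ)*σ) := le_of_lt (Real.rpow_pos_of_pos hp0 _)
      have hmp : (0:ℝ) ≤ (m:ℝ)^(κ-1) := by positivity
      nlinarith [mul_nonneg hrp hmp, mul_nonneg (mul_nonneg hC₀0 (by positivity : (0:ℝ) ≤ (σ+2)^(κ-1))) hGs0]
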